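/- Stopping time decomposition for r-variation (discrete time): for any real-valued process (Π_{s,t})_{s<t} indexed by pairs of natural numbers, there exist, for each m ∈ ℕ, increasing sequences of stopping times τ^{(m)}_j (with respect to any filtration to which Π is adapted), such that for every 0 < ρ < r < ∞, the quantity sup over finite increasing sequences u_0 < ⋯ < u_L of Σ_{l=1}^{L} |Π_{u_{l-1},u_l}|^r is bounded by (Π^*)^r/(1−2^{−r}) + 2^ρ Σ_{m=0}^{∞} (2^{−m}Π^*)^{r−ρ} Σ_{j=1}^{∞} (sup_{τ^{(m)}_{j-1} ≤ t < τ^{(m)}_j} |Π_{t, τ^{(m)}_j}|)^ρ, where Π^* := sup_{0 ≤ n < n'} |Π_{n,n'}|. -/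

import Mathlib

open MeasureTheory ENNReal

noncomputable section STVD
namespace STVD

variable {Ω : Type*}

/-- running sup `Π*_t` of `|P|` over pairs `n < n' ≤ t`, valued in `ℝ≥0∞`. -/
def piStar (P : ℕ → ℕ → Ω → ℝ) (t : ℕ) (ω : Ω) : ℝ≥0∞ :=
  ((Finset.range (t+1) ×ˢ Finset.range (t+1)).filter (fun p => p.1 < p.2)).sup
    (fun p => ENNReal.ofReal |P p.1 p.2 ω|)

/-- triggering condition for generation `m`, last stopping time `s`, candidate time `t`. -/
def trig (P : ℕ → ℕ → Ω → ℝ) (m s t : ℕ) (ω : Ω) : Prop :=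
  s < t ∧ ∃ t', s ≤ t' ∧ t' < t ∧
    (2⁻¹ : ℝ≥0∞) ^ (m+1) * piStar P t ω ≤ ENNReal.ofReal |P t' t ω|

open scoped Classical in
/-- next stopping time after `s`. -/
def nxt (P : ℕ → ℕ → Ω → ℝ) (m s : ℕ) (ω : Ω) : ℕ∞ :=
  if h : ∃ t, trig P m s t ω then (Nat.find h : ℕ∞) else ⊤

/-- the stopping times. -/
def tau (P : ℕ → ℕ → Ω → ℝ) (m : ℕ) : ℕ → Ω → ℕ∞
  | 0, _ => 0
  | (j+1), ω => if h : tau P m j ω = ⊤ then ⊤ else nxt P m ((tau P m j ω).toNat) ω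

lemma lt_nxt (P : ℕ → ℕ → Ω → ℝ) (m s : ℕ) (ω : Ω) : (s : ℕ∞) < nxt P m s ω := by
  classical
  rw [nxt]
  split_ifs with h
  · exact_mod_cast (Nat.find_spec h).1
  · exact ENat.coe_lt_top s

lemma tau_zero (P : ℕ → ℕ → Ω → ℝ) (m : ℕ) (ω : Ω) : tau P m 0 ω = 0 := rfl

lemma tau_top_succ {P : ℕ → ℕ → Ω → ℝ} {m j : ℕ} {ω : Ω} (h : tau P m j ω = ⊤) :
    tau P m (j+1) ω = ⊤ := by
  rw [tau, dif_pos h]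

lemma tau_succ_of_ne_top {P : ℕ → ℕ → Ω → ℝ} {m j : ℕ} {ω : Ω} (h : tau P m j ω ≠ ⊤) :
    tau P m (j+1) ω = nxt P m ((tau P m j ω).toNat) ω := by
  rw [tau, dif_neg h]

lemma tau_lt_succ {P : ℕ → ℕ → Ω → ℝ} {m j : ℕ} {ω : Ω} (h : tau P m j ω ≠ ⊤) :
    tau P m j ω < tau P m (j+1) ω := by
  rw [tau_succ_of_ne_top h]
  conv_lhs => rw [← ENat.coe_toNat h]
  exact lt_nxt P m _ ω

lemma tau_mono (P : ℕ → ℕ → Ω → ℝ) (m j : ℕ) (ω : Ω) : tau P m j ω ≤ tau P m (j+1) ω := by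
  by_cases h : tau P m j ω = ⊤
  · rw [tau_top_succ h]; exact le_top
  · exact (tau_lt_succ h).le

lemma self_le_tau (P : ℕ → ℕ → Ω → ℝ) (m j : ℕ) (ω : Ω) : (j : ℕ∞) ≤ tau P m j ω := by
  induction j with
  | zero => simp [tau_zero]
  | succ j ih =>
    by_cases h : tau P m j ω = ⊤
    · rw [tau_top_succ h]; exact le_top
    · have := tau_lt_succ (P := P) (m := m) (j := j) (ω := ω) h
      have h2 : (j : ℕ∞) < tau P m (j+1) ω := lt_of_le_of_lt ih this
      exact Order.add_one_le_of_lt h2 |>.trans_eq' (by push_cast; ring_nf)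

/-- if `τ_{k+1}` is finite then `τ_k` is finite and the trigger condition holds. -/
lemma trig_of_tau_succ {P : ℕ → ℕ → Ω → ℝ} {m k t : ℕ} {ω : Ω}
    (h : tau P m (k+1) ω = (t : ℕ∞)) :
    ∃ s : ℕ, tau P m k ω = (s : ℕ∞) ∧ trig P m s t ω := by
  classical
  have hk : tau P m k ω ≠ ⊤ := by
    intro htop
    rw [tau_top_succ htop] at h
    exact (ENat.coe_lt_top t).ne' h
  refine ⟨(tau P m k ω).toNat, (ENat.coe_toNat hk).symm, ?_⟩
  rw [tau_succ_of_ne_top hk, nxt] at h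
  split_ifs at h with hex
  · have : Nat.find hex = t := by exact_mod_cast h
    exact this ▸ Nat.find_spec hex
  · exact absurd h (by simp)

/-- minimality: if the trigger fires at `t` then `τ_{k+1} ≤ t`. -/
lemma tau_succ_le_of_trig {P : ℕ → ℕ → Ω → ℝ} {m k s t : ℕ} {ω : Ω}
    (hk : tau P m k ω = (s : ℕ∞)) (ht : trig P m s t ω) :
    tau P m (k+1) ω ≤ (t : ℕ∞) := by
  classical
  have hne : tau P m k ω ≠ ⊤ := by rw [hk]; exact (ENat.coe_lt_top s).ne
  rw [tau_succ_of_ne_top hne, nxt]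
  have hs : (tau P m k ω).toNat = s := by rw [hk]; exact ENat.toNat_coe s
  rw [hs]
  have hex : ∃ t', trig P m s t' ω := ⟨t, ht⟩
  rw [dif_pos hex]
  exact_mod_cast Nat.find_le ht

section Measurability

variable {mΩ : MeasurableSpace Ω}

lemma measurable_finset_sup {α : Type*} {mα : MeasurableSpace α} {ι : Type*} (s : Finset ι)
    (f : ι → α → ℝ≥0∞) (hf : ∀ i ∈ s, Measurable (f i)) :
    Measurable fun a => s.sup (fun i => f i a) := by
  classical
  induction s using Finset.induction with
  | empty => simpa using measurable_const
  | @insert i s hi ih =>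
    simp only [Finset.sup_insert]
    exact (hf i (Finset.mem_insert_self i s)).sup
      (ih fun j hj => hf j (Finset.mem_insert_of_mem hj))

lemma measurable_piStar (ℱ : Filtration ℕ mΩ) (P : ℕ → ℕ → Ω → ℝ)
    (hadapted : ∀ s t : ℕ, s < t → StronglyMeasurable[ℱ t] (P s t)) (t : ℕ) :
    Measurable[ℱ t] (piStar P t) := by
  apply measurable_finset_sup (mα := ℱ t)
  rintro ⟨n, n'⟩ hp
  simp only [Finset.mem_filter, Finset.mem_product, Finset.mem_range] at hp
  have h1 : n' ≤ t := Nat.lt_succ_iff.mp hp.1.2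
  have h2 : Measurable[ℱ t] (P n n') :=
    ((hadapted n n' hp.2).mono (ℱ.mono h1)).measurable
  exact (measurable_abs.comp h2).ennreal_ofReal

lemma measurableSet_trig (ℱ : Filtration ℕ mΩ) (P : ℕ → ℕ → Ω → ℝ)
    (hadapted : ∀ s t : ℕ, s < t → StronglyMeasurable[ℱ t] (P s t))
    (m s t n : ℕ) (htn : t ≤ n) :
    MeasurableSet[ℱ n] {ω | trig P m s t ω} := by
  have hset : {ω | trig P m s t ω}
      = ⋃ t' ∈ Finset.Ico s t,
          {ω | (2⁻¹ : ℝ≥0∞) ^ (m+1) * piStar P t ω ≤ ENNReal.ofReal |P t' t ω|} := by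
    ext ω
    simp only [Set.mem_setOf_eq, Set.mem_iUnion, Finset.mem_Ico, trig]
    constructor
    · rintro ⟨-, t', h1, h2, h3⟩; exact ⟨t', ⟨h1, h2⟩, h3⟩
    · rintro ⟨t', ⟨h1, h2⟩, h3⟩; exact ⟨lt_of_le_of_lt h1 h2, t', h1, h2, h3⟩
  rw [hset]
  apply MeasurableSet.biUnion (Finset.Ico s t).countable_toSet
  intro t' ht'
  simp only [Finset.coe_Ico, Set.mem_Ico] at ht'
  have hpi : Measurable[ℱ n] (piStar P t) :=
    (measurable_piStar ℱ P hadapted t).mono (ℱ.mono htn) le_rfl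
  have hP : Measurable[ℱ n] (P t' t) :=
    ((hadapted t' t ht'.2).mono (ℱ.mono htn)).measurable
  exact measurableSet_le (hpi.const_mul _) ((measurable_abs.comp hP).ennreal_ofReal)

lemma measurableSet_nxt_le (ℱ : Filtration ℕ mΩ) (P : ℕ → ℕ → Ω → ℝ)
    (hadapted : ∀ s t : ℕ, s < t → StronglyMeasurable[ℱ t] (P s t))
    (m s n : ℕ) :
    MeasurableSet[ℱ n] {ω | nxt P m s ω ≤ (n : ℕ∞)} := by
  classical
  have hset : {ω | nxt P m s ω ≤ (n : ℕ∞)}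
      = ⋃ t ∈ Finset.range (n+1), {ω | trig P m s t ω} := by
    ext ω
    simp only [Set.mem_setOf_eq, Set.mem_iUnion, Finset.mem_range, Nat.lt_succ_iff]
    constructor
    · intro h
      rw [nxt] at h
      split_ifs at h with hex
      · have hfind : (Nat.find hex : ℕ) ≤ n := by exact_mod_cast h
        exact ⟨Nat.find hex, hfind, Nat.find_spec hex⟩
      · exact absurd h (by simp)
    · rintro ⟨t, htn, htrig⟩
      rw [nxt, dif_pos ⟨t, htrig⟩]
      exact_mod_cast (Nat.find_le htrig).trans htn
  rw [hset]
  exact MeasurableSet.biUnion (Finset.range (n+1)).countable_toSet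
    (fun t ht => measurableSet_trig ℱ P hadapted m s t n
      (Nat.lt_succ_iff.mp (Finset.mem_range.mp ht)))

lemma measurableSet_tau_le (ℱ : Filtration ℕ mΩ) (P : ℕ → ℕ → Ω → ℝ)
    (hadapted : ∀ s t : ℕ, s < t → StronglyMeasurable[ℱ t] (P s t))
    (m j n : ℕ) :
    MeasurableSet[ℱ n] {ω | tau P m j ω ≤ (n : ℕ∞)} := by
  classical
  induction j generalizing n with
  | zero =>
    have : {ω | tau P m 0 ω ≤ (n : ℕ∞)} = Set.univ := by
      ext ω; simp [tau_zero]
    rw [this]; exact MeasurableSet.univ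
  | succ j ih =>
    have hmeq : ∀ s : ℕ, s ≤ n → MeasurableSet[ℱ n] {ω | tau P m j ω = (s : ℕ∞)} := by
      intro s hs
      match s with
      | 0 =>
        have h0 : {ω | tau P m j ω = ((0:ℕ) : ℕ∞)} = {ω | tau P m j ω ≤ ((0:ℕ) : ℕ∞)} := by
          ext ω
          simp only [Set.mem_setOf_eq, Nat.cast_zero]
          exact ⟨fun h => h.le, fun h => le_antisymm h (zero_le)⟩
        rw [h0]
        exact (ℱ.mono (Nat.zero_le n)) _ (ih 0)
      | (s'+1) =>
        have h1 : {ω | tau P m j ω = ((s'+1 : ℕ) : ℕ∞)}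
            = {ω | tau P m j ω ≤ ((s'+1 : ℕ) : ℕ∞)} \ {ω | tau P m j ω ≤ ((s' : ℕ) : ℕ∞)} := by
          ext ω
          simp only [Set.mem_diff, Set.mem_setOf_eq]
          constructor
          · intro h
            refine ⟨le_of_eq h, fun hc => ?_⟩
            rw [h] at hc
            have : (s'+1 : ℕ) ≤ s' := by exact_mod_cast hc
            omega
          · rintro ⟨hle, hgt⟩
            have hlt : ((s' : ℕ) : ℕ∞) < tau P m j ω := lt_of_not_ge hgt
            have h2 : ((s' : ℕ) : ℕ∞) + 1 ≤ tau P m j ω :=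
              (ENat.add_one_le_iff (ENat.coe_lt_top s').ne).mpr hlt
            refine le_antisymm hle (by exact_mod_cast h2)
        rw [h1]
        exact MeasurableSet.diff ((ℱ.mono hs) _ (ih (s'+1)))
          ((ℱ.mono (le_trans (Nat.le_succ s') hs)) _ (ih s'))
    have hset : {ω | tau P m (j+1) ω ≤ (n : ℕ∞)}
        = ⋃ s ∈ Finset.range (n+1),
            ({ω | tau P m j ω = (s : ℕ∞)} ∩ {ω | nxt P m s ω ≤ (n : ℕ∞)}) := by
      ext ω
      simp only [Set.mem_iUnion, Set.mem_inter_iff, Set.mem_setOf_eq, Finset.mem_range,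
        Nat.lt_succ_iff]
      constructor
      · intro h
        have hne1 : tau P m (j+1) ω ≠ ⊤ := fun htop => by
          rw [htop] at h; exact absurd h (by simp)
        have hne : tau P m j ω ≠ ⊤ := fun htop => hne1 (tau_top_succ htop)
        refine ⟨(tau P m j ω).toNat, ?_, (ENat.coe_toNat hne).symm, ?_⟩
        · have hh : tau P m j ω ≤ (n : ℕ∞) := le_trans (tau_mono P m j ω) h
          rw [← ENat.coe_toNat hne] at hh
          exact_mod_cast hh
        · rw [← tau_succ_of_ne_top hne]
          exact h
      · rintro ⟨s, -, hseq, hnxt⟩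
        have hne : tau P m j ω ≠ ⊤ := by rw [hseq]; exact (ENat.coe_lt_top s).ne
        rw [tau_succ_of_ne_top hne, hseq, ENat.toNat_coe]
        exact hnxt
    rw [hset]
    exact MeasurableSet.biUnion (Finset.range (n+1)).countable_toSet
      (fun s hsr => MeasurableSet.inter
        (hmeq s (Nat.lt_succ_iff.mp (Finset.mem_range.mp hsr)))
        (measurableSet_nxt_le ℱ P hadapted m s n))

end Measurability

section Estimate

lemma tau_le_tau (P : ℕ → ℕ → Ω → ℝ) (m : ℕ) (ω : Ω) : Monotone (fun j => tau P m j ω) :=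
  monotone_nat_of_le_succ (fun j => tau_mono P m j ω)

lemma piStar_ne_top (P : ℕ → ℕ → Ω → ℝ) (t : ℕ) (ω : Ω) : piStar P t ω ≠ ⊤ := by
  refine (Finset.sup_lt_iff (by simp : (⊥ : ℝ≥0∞) < ⊤)).mpr (fun p _ => ?_) |>.ne
  exact ENNReal.ofReal_lt_top

lemma le_piStar (P : ℕ → ℕ → Ω → ℝ) {n n' t : ℕ} (h : n < n') (h' : n' ≤ t) (ω : Ω) :
    ENNReal.ofReal |P n n' ω| ≤ piStar P t ω := by
  rw [piStar]
  exact Finset.le_sup (f := fun p : ℕ × ℕ => ENNReal.ofReal |P p.1 p.2 ω|) (b := (n, n'))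
    (by simp only [Finset.mem_filter, Finset.mem_product, Finset.mem_range]
        exact ⟨⟨Nat.lt_succ_of_le (le_trans h.le h'), Nat.lt_succ_of_le h'⟩, h⟩)

lemma piStar_mono (P : ℕ → ℕ → Ω → ℝ) {t t' : ℕ} (h : t ≤ t') (ω : Ω) :
    piStar P t ω ≤ piStar P t' ω := by
  rw [piStar, piStar]
  apply Finset.sup_mono
  intro p hp
  simp only [Finset.mem_filter, Finset.mem_product, Finset.mem_range] at hp ⊢
  omega

lemma piStar_le_iSup (P : ℕ → ℕ → Ω → ℝ) (t : ℕ) (ω : Ω) :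
    piStar P t ω ≤ ⨆ (n : ℕ) (n' : ℕ) (_ : n < n'), ENNReal.ofReal |P n n' ω| := by
  rw [piStar]
  refine Finset.sup_le ?_
  rintro ⟨n, n'⟩ hp
  simp only [Finset.mem_filter, Finset.mem_product, Finset.mem_range] at hp
  exact le_iSup_of_le n (le_iSup_of_le n' (le_iSup_of_le hp.2 le_rfl))

lemma exists_class {a b : ℝ≥0∞} (ha : a ≠ 0) (hb : b ≠ ⊤) :
    ∃ m : ℕ, (2⁻¹ : ℝ≥0∞) ^ (m+1) * b ≤ a := by
  by_cases hb0 : b = 0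
  · exact ⟨0, by simp [hb0]⟩
  obtain ⟨k, hk⟩ := ENNReal.exists_inv_two_pow_lt (ENNReal.div_ne_zero.mpr ⟨ha, hb⟩)
  refine ⟨k, ?_⟩
  have h1 : (2⁻¹ : ℝ≥0∞) ^ (k+1) ≤ 2⁻¹ ^ k := by
    rw [pow_succ]
    exact (mul_le_mul_right (by norm_num : (2⁻¹ : ℝ≥0∞) ≤ 1) _).trans_eq (mul_one _)
  have h2 : (2⁻¹ : ℝ≥0∞) ^ k * b < a := by
    exact (ENNReal.lt_div_iff_mul_lt (Or.inl hb0) (Or.inl hb)).mp hk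
  exact le_trans (mul_le_mul_left h1 b) h2.le

/-- the oscillation over `[τ_k, τ_{k+1})` is at least the triggering threshold. -/
lemma osc_ge (P : ℕ → ℕ → Ω → ℝ) (ω : Ω) {m k t : ℕ}
    (h : tau P m (k+1) ω = (t : ℕ∞)) :
    (2⁻¹ : ℝ≥0∞) ^ (m+1) * piStar P t ω ≤
      ⨆ (t' : ℕ) (_ : (t' : ℕ∞) = tau P m (k + 1) ω)
        (t'' : ℕ) (_ : tau P m k ω ≤ (t'' : ℕ∞)) (_ : t'' < t'),
        ENNReal.ofReal |P t'' t' ω| := by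
  obtain ⟨s, hs, htr⟩ := trig_of_tau_succ h
  obtain ⟨w, hw1, hw2, hw3⟩ := htr.2
  refine le_trans hw3 ?_
  refine le_iSup_of_le t (le_iSup_of_le h.symm (le_iSup_of_le w (le_iSup_of_le ?_
    (le_iSup_of_le hw2 le_rfl))))
  rw [hs]
  exact_mod_cast hw1

/-- oscillation of the process over `[τ_j, τ_{j+1})`, evaluated at `τ_{j+1}`. -/
def Osc (P : ℕ → ℕ → Ω → ℝ) (ω : Ω) (m j : ℕ) : ℝ≥0∞ :=
  ⨆ (t' : ℕ) (_ : (t' : ℕ∞) = tau P m (j + 1) ω)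
    (t : ℕ) (_ : tau P m j ω ≤ (t : ℕ∞)) (_ : t < t'),
    ENNReal.ofReal |P t t' ω|

lemma osc_ge' (P : ℕ → ℕ → Ω → ℝ) (ω : Ω) {m k t : ℕ}
    (h : tau P m (k+1) ω = (t : ℕ∞)) :
    (2⁻¹ : ℝ≥0∞) ^ (m+1) * piStar P t ω ≤ Osc P ω m k :=
  osc_ge P ω h

set_option maxHeartbeats 2000000 in
lemma key (P : ℕ → ℕ → Ω → ℝ) (ω : Ω) {ρ r : ℝ} (hρ : 0 < ρ) (hρr : ρ < r)
    (L : ℕ) (u : Fin (L + 1) → ℕ) (hu : StrictMono u) :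
    ∑ l : Fin L, (ENNReal.ofReal |P (u l.castSucc) (u l.succ) ω|) ^ r
      ≤ (⨆ (n : ℕ) (n' : ℕ) (_ : n < n'), ENNReal.ofReal |P n n' ω|) ^ r
          / (1 - (2 : ℝ≥0∞) ^ (-r))
        + (2 : ℝ≥0∞) ^ ρ * ∑' m : ℕ,
            ((2 : ℝ≥0∞) ^ (-(m : ℝ))
                * ⨆ (n : ℕ) (n' : ℕ) (_ : n < n'), ENNReal.ofReal |P n n' ω|) ^ (r - ρ)
              * ∑' j : ℕ, (Osc P ω m j) ^ ρ := by
  classical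
  have hr : 0 < r := hρ.trans hρr
  have hpow2 : ∀ m : ℕ, (2 : ℝ≥0∞) ^ (-(m : ℝ)) = (2⁻¹ : ℝ≥0∞) ^ m := by
    intro m
    rw [ENNReal.rpow_neg, ENNReal.rpow_natCast]
    exact ENNReal.inv_pow
  simp_rw [hpow2]
  set M := ⨆ (n : ℕ) (n' : ℕ) (_ : n < n'), ENNReal.ofReal |P n n' ω| with hMdef
  set A : Fin L → ℝ≥0∞ := fun l => ENNReal.ofReal |P (u l.castSucc) (u l.succ) ω| with hAdef
  have hAtop : ∀ l, A l ≠ ⊤ := fun l => ENNReal.ofReal_ne_top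
  have hpiM : ∀ t : ℕ, piStar P t ω ≤ M :=
    fun t => (piStar_le_iSup P t ω).trans_eq hMdef.symm
  -- the master construction, for every increment with nonzero value
  have master : ∀ l : Fin L, ∃ m j t : ℕ, A l ≠ 0 →
      (A l ≤ (2⁻¹ : ℝ≥0∞) ^ m * piStar P (u l.succ) ω
       ∧ tau P m (j+1) ω = (t : ℕ∞)
       ∧ u l.castSucc < t ∧ t ≤ u l.succ
       ∧ ∀ k, tau P m k ω ≤ ((u l.castSucc : ℕ) : ℕ∞) → k ≤ j) := by
    intro l
    by_cases h0 : A l = 0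
    · exact ⟨0, 0, 0, fun hc => absurd h0 hc⟩
    have hpair : u l.castSucc < u l.succ := hu (Fin.castSucc_lt_succ : l.castSucc < l.succ)
    have hAp : A l ≤ piStar P (u l.succ) ω := le_piStar P hpair le_rfl ω
    have hex : ∃ m : ℕ, (2⁻¹ : ℝ≥0∞) ^ (m+1) * piStar P (u l.succ) ω ≤ A l :=
      exists_class h0 (piStar_ne_top P (u l.succ) ω)
    set m := Nat.find hex with hmdef
    have hlow : (2⁻¹ : ℝ≥0∞) ^ (m+1) * piStar P (u l.succ) ω ≤ A l := Nat.find_spec hex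
    have hup : A l ≤ (2⁻¹ : ℝ≥0∞) ^ m * piStar P (u l.succ) ω := by
      rcases Nat.eq_zero_or_pos m with h | h
      · rw [h, pow_zero, one_mul]; exact hAp
      · have hk : m - 1 < Nat.find hex := by omega
        have h' := not_le.mp (Nat.find_min hex hk)
        rw [Nat.sub_add_cancel h] at h'
        exact h'.le
    set Q : ℕ → Prop := fun j => tau P m j ω ≤ ((u l.castSucc : ℕ) : ℕ∞) with hQdef
    have hQ0 : Q 0 := by simp [hQdef, tau_zero]
    set j := Nat.findGreatest Q (u l.castSucc) with hjdef
    have hjle : Q j := Nat.findGreatest_spec (Nat.zero_le _) hQ0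
    have h6 : ∀ k, Q k → k ≤ j := by
      intro k hk
      have hkb : (k : ℕ∞) ≤ ((u l.castSucc : ℕ) : ℕ∞) := le_trans (self_le_tau P m k ω) hk
      exact Nat.le_findGreatest (by exact_mod_cast hkb) hk
    have hne : tau P m j ω ≠ ⊤ := fun hc => by
      rw [hQdef] at hjle; rw [hc] at hjle; exact absurd hjle (by simp)
    set sl := (tau P m j ω).toNat with hsldef
    have hs : tau P m j ω = (sl : ℕ∞) := (ENat.coe_toNat hne).symm
    have hsle : sl ≤ u l.castSucc := by
      have := hjle; rw [hQdef, hs] at this; exact_mod_cast this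
    have htrig : trig P m sl (u l.succ) ω :=
      ⟨lt_of_le_of_lt hsle hpair, u l.castSucc, hsle, hpair, hlow⟩
    have h1 : tau P m (j+1) ω ≤ ((u l.succ : ℕ) : ℕ∞) := tau_succ_le_of_trig hs htrig
    have hne1 : tau P m (j+1) ω ≠ ⊤ := fun hc => by
      rw [hc] at h1; exact absurd h1 (by simp)
    set t := (tau P m (j+1) ω).toNat with htdef
    have ht : tau P m (j+1) ω = (t : ℕ∞) := (ENat.coe_toNat hne1).symm
    have htle : t ≤ u l.succ := by rw [ht] at h1; exact_mod_cast h1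
    have htgt : u l.castSucc < t := by
      by_contra hc
      push_neg at hc
      have hQ1 : Q (j+1) := by
        show tau P m (j+1) ω ≤ ((u l.castSucc : ℕ) : ℕ∞)
        rw [ht]; exact_mod_cast hc
      exact absurd (h6 _ hQ1) (by omega)
    exact ⟨m, j, t, fun _ => ⟨hup, ht, htgt, htle, h6⟩⟩
  choose mf jf tf hprop using master
  set s : Finset (Fin L) := Finset.univ.filter (fun l => A l ≠ 0) with hsdef
  have hmem : ∀ l ∈ s, A l ≠ 0 := fun l hl => (Finset.mem_filter.mp hl).2
  have hsucc_le : ∀ p q : Fin L, p < q → u p.succ ≤ u q.castSucc :=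
    fun p q h => hu.monotone (Fin.succ_le_castSucc_iff.mpr h)
  -- strict monotonicity of j within a class
  have jmono : ∀ p ∈ s, ∀ q ∈ s, p < q → mf p = mf q → jf p < jf q := by
    intro p hp q hq hpq hm
    obtain ⟨-, h3p, -, h5p, -⟩ := hprop p (hmem p hp)
    obtain ⟨-, -, -, -, h6q⟩ := hprop q (hmem q hq)
    have hle : tau P (mf q) (jf p + 1) ω ≤ ((u q.castSucc : ℕ) : ℕ∞) := by
      rw [← hm, h3p]
      exact_mod_cast le_trans h5p (hsucc_le p q hpq)
    have := h6q _ hle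
    omega
  -- the escape set: last elements of their class
  set E := s.filter (fun l => ∀ l' ∈ s, l < l' → mf l' ≠ mf l) with hEdef
  have hEs : E ⊆ s := Finset.filter_subset _ _
  -- next same-class element, for non-escape increments
  set nF : Fin L → Finset (Fin L) :=
    fun l => s.filter (fun l' => l < l' ∧ mf l' = mf l) with hnFdef
  set nf : Fin L → Fin L :=
    fun l => if h : (nF l).Nonempty then (nF l).min' h else l with hnfdef
  have hnf : ∀ l ∈ s \ E, (nf l ∈ s ∧ l < nf l ∧ mf (nf l) = mf l)
      ∧ ∀ l' ∈ s, l < l' → mf l' = mf l → nf l ≤ l' := by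
    intro l hl
    obtain ⟨hls, hlE⟩ := Finset.mem_sdiff.mp hl
    have hnonempty : (nF l).Nonempty := by
      rw [hEdef] at hlE
      simp only [Finset.mem_filter, hls, true_and, not_forall] at hlE
      obtain ⟨l', hl's, hll', hmm⟩ := hlE
      refine ⟨l', ?_⟩
      rw [hnFdef]
      simp only [Finset.mem_filter]
      exact ⟨hl's, hll', not_not.mp hmm⟩
    have hmin : nf l = (nF l).min' hnonempty := by rw [hnfdef]; simp [dif_pos hnonempty]
    have hmemF : nf l ∈ nF l := by rw [hmin]; exact Finset.min'_mem _ _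
    have hprops : nf l ∈ s ∧ l < nf l ∧ mf (nf l) = mf l := by
      rw [hnFdef] at hmemF
      simp only [Finset.mem_filter] at hmemF
      exact ⟨hmemF.1, hmemF.2.1, hmemF.2.2⟩
    refine ⟨hprops, fun l' hl's hll' hmm => ?_⟩
    rw [hmin]
    exact Finset.min'_le _ _ (by rw [hnFdef]; simp only [Finset.mem_filter]; exact ⟨hl's, hll', hmm⟩)
  -- payment estimate for non-escape increments
  have hpay : ∀ l ∈ s \ E,
      A l ^ r ≤ (2:ℝ≥0∞) ^ ρ * (((2⁻¹:ℝ≥0∞) ^ (mf l)) * M) ^ (r - ρ)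
        * (Osc P ω (mf l) (jf (nf l))) ^ ρ := by
    intro l hl
    obtain ⟨⟨hnfs, hlt, hmeq⟩, -⟩ := hnf l hl
    have hls := (Finset.mem_sdiff.mp hl).1
    have hA0 := hmem l hls
    obtain ⟨hup', h3', h4', -, -⟩ := hprop (nf l) (hmem _ hnfs)
    have hosc : (2⁻¹:ℝ≥0∞) ^ (mf (nf l) + 1) * piStar P (tf (nf l)) ω
        ≤ Osc P ω (mf (nf l)) (jf (nf l)) := osc_ge' P ω h3'
    have hts : u l.succ ≤ tf (nf l) := le_trans (hsucc_le l (nf l) hlt) (le_of_lt h4')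
    obtain ⟨hupl, -, -, -, -⟩ := hprop l hA0
    have h22 : (2:ℝ≥0∞) * 2⁻¹ = 1 := ENNReal.mul_inv_cancel two_ne_zero ENNReal.ofNat_ne_top
    have hchain : A l ≤ 2 * Osc P ω (mf l) (jf (nf l)) := by
      calc A l ≤ (2⁻¹:ℝ≥0∞) ^ (mf l) * piStar P (u l.succ) ω := hupl
        _ ≤ (2⁻¹:ℝ≥0∞) ^ (mf l) * piStar P (tf (nf l)) ω :=
            mul_le_mul_right (piStar_mono P hts ω) _
        _ = 2 * ((2⁻¹:ℝ≥0∞) ^ (mf l + 1) * piStar P (tf (nf l)) ω) := by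
            rw [pow_succ]
            rw [show (2:ℝ≥0∞) * ((2⁻¹:ℝ≥0∞) ^ (mf l) * 2⁻¹ * piStar P (tf (nf l)) ω)
              = ((2:ℝ≥0∞) * 2⁻¹) * ((2⁻¹:ℝ≥0∞) ^ (mf l) * piStar P (tf (nf l)) ω) from by ring]
            rw [h22, one_mul]
        _ ≤ 2 * Osc P ω (mf l) (jf (nf l)) := by
            refine mul_le_mul_right ?_ _
            rw [← hmeq]
            exact hosc
    have hAM : A l ≤ (2⁻¹:ℝ≥0∞) ^ (mf l) * M :=
      hupl.trans (mul_le_mul_right (hpiM _) _)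
    have hsplit : A l ^ r = A l ^ (r - ρ) * A l ^ ρ := by
      rw [← ENNReal.rpow_add _ _ hA0 (hAtop l)]
      congr 1
      ring
    rw [hsplit]
    calc A l ^ (r - ρ) * A l ^ ρ
        ≤ ((2⁻¹:ℝ≥0∞) ^ (mf l) * M) ^ (r - ρ) * (2 * Osc P ω (mf l) (jf (nf l))) ^ ρ :=
          mul_le_mul' (ENNReal.rpow_le_rpow hAM (by linarith)) (ENNReal.rpow_le_rpow hchain hρ.le)
      _ = (2:ℝ≥0∞) ^ ρ * (((2⁻¹:ℝ≥0∞) ^ (mf l)) * M) ^ (r - ρ)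
            * (Osc P ω (mf l) (jf (nf l))) ^ ρ := by
          rw [ENNReal.mul_rpow_of_nonneg _ _ hρ.le]
          ring
  -- injectivity of the payment target
  have hinj0 : ∀ x ∈ s \ E, ∀ y ∈ s \ E, x < y → mf x = mf y → jf (nf x) < jf (nf y) := by
    intro x hx y hy hxy hm
    obtain ⟨⟨hxs, hxlt, hxm⟩, hxmin⟩ := hnf x hx
    obtain ⟨⟨hys, hylt, hym⟩, -⟩ := hnf y hy
    have hy' := (Finset.mem_sdiff.mp hy).1
    have h1 : nf x ≤ y := hxmin y hy' hxy hm.symm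
    have h2 : nf x < nf y := lt_of_le_of_lt h1 hylt
    exact jmono (nf x) hxs (nf y) hys h2 (by rw [hxm, hym, hm])
  have hinj : ∀ x ∈ s \ E, ∀ y ∈ s \ E,
      (mf x, jf (nf x)) = (mf y, jf (nf y)) → x = y := by
    intro x hx y hy hxy
    obtain ⟨hm, hj⟩ := Prod.mk.injEq _ _ _ _ ▸ hxy
    by_contra hne
    rcases lt_or_gt_of_ne hne with hlt | hlt
    · exact absurd hj (hinj0 x hx y hy hlt hm).ne
    · exact absurd hj.symm (hinj0 y hy x hx hlt hm.symm).ne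
  -- escape-class injectivity
  have hEinj : ∀ x ∈ E, ∀ y ∈ E, mf x = mf y → x = y := by
    intro x hx y hy hxy
    by_contra hne
    rcases lt_or_gt_of_ne hne with hlt | hlt
    · exact ((Finset.mem_filter.mp hx).2 y (hEs hy) hlt) hxy.symm
    · exact ((Finset.mem_filter.mp hy).2 x (hEs hx) hlt) hxy
  -- the two global bounds
  have hE : ∑ l ∈ E, A l ^ r ≤ M ^ r / (1 - (2:ℝ≥0∞) ^ (-r)) := by
    have hterm : ∀ m : ℕ, ((2⁻¹:ℝ≥0∞) ^ m * M) ^ r = ((2:ℝ≥0∞) ^ (-r)) ^ m * M ^ r := by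
      intro m
      rw [ENNReal.mul_rpow_of_nonneg _ _ hr.le]
      congr 1
      rw [← ENNReal.rpow_natCast (2⁻¹:ℝ≥0∞) m, ← ENNReal.rpow_mul, mul_comm,
        ENNReal.rpow_mul, ENNReal.rpow_natCast]
      congr 1
      rw [ENNReal.inv_rpow, ← ENNReal.rpow_neg]
    calc ∑ l ∈ E, A l ^ r
        ≤ ∑ l ∈ E, ((2⁻¹:ℝ≥0∞) ^ (mf l) * M) ^ r := by
          refine Finset.sum_le_sum (fun l hl => ENNReal.rpow_le_rpow ?_ hr.le)
          exact ((hprop l (hmem l (hEs hl))).1).trans (mul_le_mul_right (hpiM _) _)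
      _ = ∑ m ∈ E.image mf, ((2⁻¹:ℝ≥0∞) ^ m * M) ^ r := by rw [Finset.sum_image hEinj]
      _ ≤ ∑' m : ℕ, ((2⁻¹:ℝ≥0∞) ^ m * M) ^ r := ENNReal.sum_le_tsum _
      _ = ∑' m : ℕ, ((2:ℝ≥0∞) ^ (-r)) ^ m * M ^ r := by simp_rw [hterm]
      _ = (1 - (2:ℝ≥0∞) ^ (-r))⁻¹ * M ^ r := by
          rw [ENNReal.tsum_mul_right, ENNReal.tsum_geometric]
      _ = M ^ r / (1 - (2:ℝ≥0∞) ^ (-r)) := (ENNReal.div_eq_inv_mul).symm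
  have hPd : ∑ l ∈ s \ E, A l ^ r
      ≤ (2:ℝ≥0∞) ^ ρ * ∑' m : ℕ, ((2⁻¹:ℝ≥0∞) ^ m * M) ^ (r - ρ) * ∑' j : ℕ, (Osc P ω m j) ^ ρ := by
    calc ∑ l ∈ s \ E, A l ^ r
        ≤ ∑ l ∈ s \ E, (fun p : ℕ × ℕ => (2:ℝ≥0∞) ^ ρ * ((2⁻¹:ℝ≥0∞) ^ p.1 * M) ^ (r - ρ)
            * (Osc P ω p.1 p.2) ^ ρ) (mf l, jf (nf l)) := Finset.sum_le_sum hpay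
      _ = ∑ p ∈ (s \ E).image (fun l => (mf l, jf (nf l))),
            (2:ℝ≥0∞) ^ ρ * ((2⁻¹:ℝ≥0∞) ^ p.1 * M) ^ (r - ρ) * (Osc P ω p.1 p.2) ^ ρ := by
          rw [Finset.sum_image hinj]
      _ ≤ ∑' p : ℕ × ℕ, (2:ℝ≥0∞) ^ ρ * ((2⁻¹:ℝ≥0∞) ^ p.1 * M) ^ (r - ρ) * (Osc P ω p.1 p.2) ^ ρ :=
          ENNReal.sum_le_tsum _
      _ = ∑' m : ℕ, ∑' j : ℕ, (2:ℝ≥0∞) ^ ρ * ((2⁻¹:ℝ≥0∞) ^ m * M) ^ (r - ρ) * (Osc P ω m j) ^ ρ :=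
          ENNReal.tsum_prod'
      _ = (2:ℝ≥0∞) ^ ρ * ∑' m : ℕ, ((2⁻¹:ℝ≥0∞) ^ m * M) ^ (r - ρ) * ∑' j : ℕ, (Osc P ω m j) ^ ρ := by
          simp_rw [mul_assoc, ENNReal.tsum_mul_left]
  -- combine
  calc ∑ l : Fin L, A l ^ r
      = ∑ l ∈ s, A l ^ r := by
        refine (Finset.sum_subset (Finset.subset_univ s) (fun x _ hx => ?_)).symm
        have hx0 : A x = 0 := by
          by_contra hc
          exact hx (by rw [hsdef]; simp only [Finset.mem_filter, Finset.mem_univ, true_and]; exact hc)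
        rw [hx0, ENNReal.zero_rpow_of_pos hr]
    _ = ∑ l ∈ s \ E, A l ^ r + ∑ l ∈ E, A l ^ r := (Finset.sum_sdiff hEs).symm
    _ ≤ (2:ℝ≥0∞) ^ ρ * (∑' m : ℕ, ((2⁻¹:ℝ≥0∞) ^ m * M) ^ (r - ρ) * ∑' j : ℕ, (Osc P ω m j) ^ ρ)
        + M ^ r / (1 - (2:ℝ≥0∞) ^ (-r)) := add_le_add hPd hE
    _ = M ^ r / (1 - (2:ℝ≥0∞) ^ (-r))
        + (2:ℝ≥0∞) ^ ρ * ∑' m : ℕ, ((2⁻¹:ℝ≥0∞) ^ m * M) ^ (r - ρ) * ∑' j : ℕ, (Osc P ω m j) ^ ρ :=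
      add_comm _ _

end Estimate

end STVD

/-- stopping time decomposition for `r`-variation in discrete time.
For an adapted two-parameter process `P` there exist increasing sequences of
(extended-ℕ-valued) stopping times `τ^{(m)}_j` starting at `0` such that for all
`0 < ρ < r < ∞` the `r`-variation sum is bounded by
`(Π^*)^r/(1-2^{-r}) + 2^ρ Σ_m (2^{-m}Π^*)^{r-ρ} Σ_j (sup_{τ_{j} ≤ t < τ_{j+1}} |Π_{t,τ_{j+1}}|)^ρ`. -/
theorem stopping_time_variation_decomposition
    {Ω : Type*} {mΩ : MeasurableSpace Ω} (ℱ : Filtration ℕ mΩ)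
    (P : ℕ → ℕ → Ω → ℝ)
    (hadapted : ∀ s t : ℕ, s < t → StronglyMeasurable[ℱ t] (P s t)) :
    ∃ τ : ℕ → ℕ → Ω → ℕ∞,
      (∀ m ω, τ m 0 ω = 0) ∧
      (∀ m j ω, τ m j ω ≤ τ m (j + 1) ω) ∧
      (∀ m j (n : ℕ), MeasurableSet[ℱ n] {ω | τ m j ω ≤ (n : ℕ∞)}) ∧
      (∀ ρ r : ℝ, 0 < ρ → ρ < r → ∀ ω : Ω,
        (⨆ (L : ℕ) (u : Fin (L + 1) → ℕ) (_ : StrictMono u),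
            ∑ l : Fin L, (ENNReal.ofReal |P (u l.castSucc) (u l.succ) ω|) ^ r)
          ≤ (⨆ (n : ℕ) (n' : ℕ) (_ : n < n'), ENNReal.ofReal |P n n' ω|) ^ r
              / (1 - (2 : ℝ≥0∞) ^ (-r))
            + (2 : ℝ≥0∞) ^ ρ * ∑' m : ℕ,
                ((2 : ℝ≥0∞) ^ (-(m : ℝ))
                    * ⨆ (n : ℕ) (n' : ℕ) (_ : n < n'), ENNReal.ofReal |P n n' ω|) ^ (r - ρ)
                  * ∑' j : ℕ,
                      (⨆ (t' : ℕ) (_ : (t' : ℕ∞) = τ m (j + 1) ω)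
                          (t : ℕ) (_ : τ m j ω ≤ (t : ℕ∞)) (_ : t < t'),
                        ENNReal.ofReal |P t t' ω|) ^ ρ) := by
  refine ⟨STVD.tau P, fun m ω => rfl, fun m j ω => STVD.tau_mono P m j ω,
    fun m j n => STVD.measurableSet_tau_le ℱ P hadapted m j n, ?_⟩
  intro ρ r hρ hρr ω
  refine iSup_le fun L => iSup_le fun u => iSup_le fun hu => ?_
  exact STVD.key P ω hρ hρr L u hu
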